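/- Let X be a real normed linear space with dim X > 2. Then for each x ∈ X, the set x^⊥_B \ {0} is path connected (in particular connected). -/

import Mathlib

/-- Birkhoff-James orthogonality. -/
def BJOrth {X : Type*} [NormedAddCommGroup X] [NormedSpace ℝ X] (x y : X) : Prop :=
  ∀ t : ℝ, ‖x‖ ≤ ‖x + t • y‖

section aux

variable {X : Type*} [NormedAddCommGroup X] [NormedSpace ℝ X]

/-- If `x ⊥_B y` and `x ≠ 0`, there is a support functional at `x` vanishing at `y`. -/
lemma exists_support (x y : X) (hx : x ≠ 0) (hy : BJOrth x y) :
    ∃ f : X →L[ℝ] ℝ, (∀ z, |f z| ≤ ‖z‖) ∧ f x = ‖x‖ ∧ f y = 0 := by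
  set S : Submodule ℝ X := Submodule.span ℝ {y} with hS
  haveI : IsClosed (S : Set X) := S.closed_of_finiteDimensional
  have hnormle : ∀ m : X, ‖(Submodule.Quotient.mk m : X ⧸ S)‖ ≤ ‖m‖ :=
    fun m => Submodule.Quotient.norm_mk_le S m
  have hxq : ‖(Submodule.Quotient.mk x : X ⧸ S)‖ = ‖x‖ := by
    refine le_antisymm (hnormle x) ?_
    refine le_of_forall_pos_le_add fun ε hε => ?_
    obtain ⟨m, hm, hmlt⟩ := Submodule.Quotient.norm_mk_lt
      (Submodule.Quotient.mk x : X ⧸ S) hε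
    have hmem : m - x ∈ S := (Submodule.Quotient.eq S).1 hm
    obtain ⟨t, ht⟩ := Submodule.mem_span_singleton.1 hmem
    have hxm : ‖x‖ ≤ ‖m‖ := by
      have := hy t
      have hmx : m = x + t • y := by rw [ht]; abel
      rwa [← hmx] at this
    linarith
  have hq0 : (Submodule.Quotient.mk x : X ⧸ S) ≠ 0 := by
    intro h
    apply hx
    rw [← norm_eq_zero, ← hxq, h, norm_zero]
  obtain ⟨g, hg1, hgx⟩ := exists_dual_vector ℝ (Submodule.Quotient.mk x : X ⧸ S) (norm_ne_zero_iff.2 hq0)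
  let π : X →L[ℝ] X ⧸ S := S.mkQ.mkContinuous 1 (by
    intro m
    simpa using hnormle m)
  refine ⟨g.comp π, ?_, ?_, ?_⟩
  · intro z
    calc |(g.comp π) z| ≤ ‖g‖ * ‖π z‖ := g.le_opNorm _
      _ ≤ ‖π z‖ := by rw [hg1]; simp
      _ ≤ ‖z‖ := hnormle z
  · have : π x = Submodule.Quotient.mk x := rfl
    simp only [ContinuousLinearMap.comp_apply, this, hgx, hxq]
    norm_cast
  · have : π y = 0 := by
      have : y ∈ S := Submodule.mem_span_singleton_self y
      simpa [π] using (Submodule.Quotient.mk_eq_zero S).2 this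
    simp [ContinuousLinearMap.comp_apply, this]

/-- A submodule of rank `> 1`, with `0` removed, is path connected. -/
lemma submodule_pc (p : Submodule ℝ X) (hp : 1 < Module.rank ℝ p) :
    IsPathConnected ((p : Set X) \ {0}) := by
  have h := isPathConnected_compl_singleton_of_one_lt_rank hp (0 : p)
  have himg := h.image (f := (Subtype.val : p → X)) continuous_subtype_val
  have : (Subtype.val : p → X) '' ({0}ᶜ) = (p : Set X) \ {0} := by
    ext z
    constructor
    · rintro ⟨w, hw, rfl⟩
      refine ⟨w.2, ?_⟩
      simp only [Set.mem_singleton_iff]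
      intro h0
      exact hw (by ext; simpa using h0)
    · rintro ⟨hz, hz0⟩
      refine ⟨⟨z, hz⟩, ?_, rfl⟩
      simp only [Set.mem_compl_iff, Set.mem_singleton_iff]
      intro h0
      apply hz0
      simpa using congrArg Subtype.val h0
  rwa [this] at himg

universe u

lemma rank_ker_gt' {Y : Type u} [NormedAddCommGroup Y] [NormedSpace ℝ Y]
    (hdim : 2 < Module.rank ℝ Y) (f : Y →L[ℝ] ℝ) :
    1 < Module.rank ℝ (LinearMap.ker (f : Y →ₗ[ℝ] ℝ)) := by
  have h := LinearMap.lift_rank_range_add_rank_ker (f : Y →ₗ[ℝ] ℝ)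
  simp only [Cardinal.lift_id'] at h
  have hr : Cardinal.lift.{u} (Module.rank ℝ (LinearMap.range (f : Y →ₗ[ℝ] ℝ))) ≤ 1 := by
    have h1 := Submodule.rank_le (LinearMap.range (f : Y →ₗ[ℝ] ℝ))
    have h2 := Cardinal.lift_le.{u}.2 h1
    simpa using h2
  by_contra hk
  push_neg at hk
  have : Module.rank ℝ Y ≤ 2 := by
    calc Module.rank ℝ Y
        = Cardinal.lift.{u} (Module.rank ℝ (LinearMap.range (f : Y →ₗ[ℝ] ℝ)))
          + Module.rank ℝ (LinearMap.ker (f : Y →ₗ[ℝ] ℝ)) := h.symm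
      _ ≤ 1 + 1 := add_le_add hr hk
      _ = 2 := one_add_one_eq_two
  exact absurd hdim (not_lt.2 this)

lemma exists_common_ker' {Y : Type u} [NormedAddCommGroup Y] [NormedSpace ℝ Y]
    (hdim : 2 < Module.rank ℝ Y) (f g : Y →L[ℝ] ℝ) :
    ∃ z : Y, z ≠ 0 ∧ f z = 0 ∧ g z = 0 := by
  set h : Y →ₗ[ℝ] ℝ × ℝ := (f : Y →ₗ[ℝ] ℝ).prod (g : Y →ₗ[ℝ] ℝ) with hh
  have hrn := LinearMap.lift_rank_range_add_rank_ker h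
  simp only [Cardinal.lift_id'] at hrn
  have hr : Cardinal.lift.{u} (Module.rank ℝ (LinearMap.range h)) ≤ 2 := by
    have h1 := Submodule.rank_le (LinearMap.range h)
    have h2 : Module.rank ℝ (ℝ × ℝ) = 2 := by
      rw [rank_prod', Module.rank_self]
      exact one_add_one_eq_two
    rw [h2] at h1
    have h3 := Cardinal.lift_le.{u}.2 h1
    simpa using h3
  have hkpos : 0 < Module.rank ℝ (LinearMap.ker h) := by
    by_contra hk
    push_neg at hk
    have hk0 : Module.rank ℝ (LinearMap.ker h) = 0 := le_antisymm hk zero_le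
    have : Module.rank ℝ Y ≤ 2 := by
      calc Module.rank ℝ Y
          = Cardinal.lift.{u} (Module.rank ℝ (LinearMap.range h))
            + Module.rank ℝ (LinearMap.ker h) := hrn.symm
        _ = Cardinal.lift.{u} (Module.rank ℝ (LinearMap.range h)) := by rw [hk0, add_zero]
        _ ≤ 2 := hr
    exact absurd hdim (not_lt.2 this)
  obtain ⟨w, hw0⟩ := rank_pos_iff_exists_ne_zero.1 hkpos
  obtain ⟨z, hz⟩ := w
  have hzmem := LinearMap.mem_ker.1 hz
  rw [hh] at hzmem
  have h1 : f z = 0 := congrArg Prod.fst hzmem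
  have h2 : g z = 0 := congrArg Prod.snd hzmem
  refine ⟨z, ?_, h1, h2⟩
  intro h0
  exact hw0 (by ext; simpa using h0)

end aux

theorem stmt_4 {X : Type*} [NormedAddCommGroup X] [NormedSpace ℝ X]
    (hdim : 2 < Module.rank ℝ X) (x : X) :
    IsPathConnected ({y : X | BJOrth x y} \ {0}) := by
  by_cases hx : x = 0
  · subst hx
    have : ({y : X | BJOrth 0 y} \ {0}) = ({0}ᶜ : Set X) := by
      ext z
      simp [BJOrth, Set.mem_diff]
    rw [this]
    exact isPathConnected_compl_singleton_of_one_lt_rank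
      (lt_trans (by norm_num) hdim) 0
  · -- x ≠ 0
    set T : Set X := {y : X | BJOrth x y} \ {0} with hT
    -- every kernel of a "good" functional minus 0 sits in T and is path connected
    have kerT : ∀ f : X →L[ℝ] ℝ, (∀ z, |f z| ≤ ‖z‖) → f x = ‖x‖ →
        ((LinearMap.ker (f : X →ₗ[ℝ] ℝ) : Set X) \ {0}) ⊆ T := by
      intro f hfb hfx
      rintro z ⟨hz, hz0⟩
      refine ⟨?_, hz0⟩
      intro t
      have hfz : f z = 0 := hz
      have : (‖x‖ : ℝ) = f (x + t • z) := by
        simp [map_add, hfx, hfz]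
      rw [this]
      calc f (x + t • z) ≤ |f (x + t • z)| := le_abs_self _
        _ ≤ ‖x + t • z‖ := hfb _
    have kerPC : ∀ f : X →L[ℝ] ℝ,
        IsPathConnected ((LinearMap.ker (f : X →ₗ[ℝ] ℝ) : Set X) \ {0}) := by
      intro f
      exact submodule_pc _ (rank_ker_gt' hdim f)
    -- base functional
    obtain ⟨f₀, hf₀1, hf₀x⟩ := exists_dual_vector ℝ x (norm_ne_zero_iff.2 hx)
    have hf₀b : ∀ z, |f₀ z| ≤ ‖z‖ := fun z => by
      calc |f₀ z| ≤ ‖f₀‖ * ‖z‖ := f₀.le_opNorm z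
        _ = ‖z‖ := by rw [hf₀1, one_mul]
    obtain ⟨b, hb, -⟩ := kerPC f₀
    refine ⟨b, kerT f₀ hf₀b hf₀x hb, ?_⟩
    intro y hy
    obtain ⟨f, hfb, hfx, hfy⟩ := exists_support x y hx hy.1
    obtain ⟨z, hz0, hzf₀, hzf⟩ := exists_common_ker' hdim f₀ f
    have hzmem₀ : z ∈ (LinearMap.ker (f₀ : X →ₗ[ℝ] ℝ) : Set X) \ {0} := ⟨hzf₀, hz0⟩
    have hzmem : z ∈ (LinearMap.ker (f : X →ₗ[ℝ] ℝ) : Set X) \ {0} := ⟨hzf, hz0⟩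
    have hymem : y ∈ (LinearMap.ker (f : X →ₗ[ℝ] ℝ) : Set X) \ {0} := ⟨hfy, hy.2⟩
    have j1 : JoinedIn T b z :=
      ((kerPC f₀).joinedIn b hb z hzmem₀).mono (kerT f₀ hf₀b hf₀x)
    have j2 : JoinedIn T z y :=
      ((kerPC f).joinedIn z hzmem y hymem).mono (kerT f hfb hfx)
    exact j1.trans j2
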